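/- arXiv:2605.17395 — 2 statements merged into one kernel-verified Lean document; each statement's English description precedes it below -/
import Mathlib

section
/- Fix b ∈ ℝ and ω > 0. Let y ∈ ℝ² with y ≠ 0, η ∈ ℝ², and t ≥ 0, and assume x^s(y,η) ≠ 0 for all s ∈ [0,t]. Then the action S(t,y,η) := (1/2)∫₀ᵗ (|ξ^s|² − |A(x^s)|² − ω²|x^s|²) ds satisfies S(t,y,η) = ((cos(2ωt) − 1)/2)·(y·η) + (sin(2ωt)/(4ω))·(|η − A(y)|² − ω²|y|²) + b·(y ∧ η − b)·∫₀ᵗ |x^s|⁻² ds, where u ∧ v := u₁v₂ − u₂v₁. -/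
/-- The Aharonov–Bohm vector potential with flux `b`:
`A(x) = (−b x₂/|x|², b x₁/|x|²)` for `x ∈ ℝ² \ {0}`. -/
noncomputable def A (b : ℝ) (x : ℝ × ℝ) : ℝ × ℝ :=
  (-b * x.2 / (x.1 ^ 2 + x.2 ^ 2), b * x.1 / (x.1 ^ 2 + x.2 ^ 2))

/-- The wedge product `u ∧ v = u₁v₂ − u₂v₁` on `ℝ²`. -/
def wedge (u v : ℝ × ℝ) : ℝ := u.1 * v.2 - u.2 * v.1

/-- The Euclidean inner product on `ℝ²`. -/
def dot (u v : ℝ × ℝ) : ℝ := u.1 * v.1 + u.2 * v.2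

/-- The squared Euclidean norm on `ℝ²`. -/
def normSq2 (u : ℝ × ℝ) : ℝ := u.1 ^ 2 + u.2 ^ 2

/-- The classical trajectory `x^t(y,η) = cos(ωt)·y + (sin(ωt)/ω)·(η − A(y))`. -/
noncomputable def traj (b ω : ℝ) (y η : ℝ × ℝ) (t : ℝ) : ℝ × ℝ :=
  Real.cos (ω * t) • y + (Real.sin (ω * t) / ω) • (η - A b y)

/-- The momentum `ξ^s(y,η) = (d/ds)x^s + A(x^s)`, defined when `x^s ≠ 0`. -/
noncomputable def xi (b ω : ℝ) (y η : ℝ × ℝ) (s : ℝ) : ℝ × ℝ :=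
  deriv (traj b ω y η) s + A b (traj b ω y η s)

/-- The action `S(t,y,η) = (1/2)∫₀ᵗ (|ξ^s|² − |A(x^s)|² − ω²|x^s|²) ds`. -/
noncomputable def action (b ω : ℝ) (y η : ℝ × ℝ) (t : ℝ) : ℝ :=
  (1 / 2) * ∫ s in (0 : ℝ)..t,
    (normSq2 (xi b ω y η s) - normSq2 (A b (traj b ω y η s))
      - ω ^ 2 * normSq2 (traj b ω y η s))

lemma AB_dot_A (b : ℝ) (x u : ℝ × ℝ) : dot u (A b x) = b * wedge x u / normSq2 x := by
  simp only [dot, wedge, A, normSq2]; ring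

lemma AB_normSq2_add (u v : ℝ × ℝ) :
    normSq2 (u + v) = normSq2 u + 2 * dot u v + normSq2 v := by
  simp only [normSq2, dot, Prod.fst_add, Prod.snd_add]; ring

lemma AB_lemB (c sn ω : ℝ) (hω : ω ≠ 0) (y v : ℝ × ℝ) :
    normSq2 ((-sn * ω) • y + c • v) - ω ^ 2 * normSq2 (c • y + (sn / ω) • v)
      = (c ^ 2 - sn ^ 2) * (normSq2 v - ω ^ 2 * normSq2 y)
        - 2 * ω * (2 * sn * c) * dot y v := by
  simp only [normSq2, dot, Prod.fst_add, Prod.snd_add, Prod.smul_fst, Prod.smul_snd,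
    smul_eq_mul]
  field_simp
  ring

lemma AB_lemC (c sn ω : ℝ) (hω : ω ≠ 0) (hp : sn ^ 2 + c ^ 2 = 1) (y v : ℝ × ℝ) :
    wedge (c • y + (sn / ω) • v) ((-sn * ω) • y + c • v) = wedge y v := by
  simp only [wedge, Prod.fst_add, Prod.snd_add, Prod.smul_fst, Prod.smul_snd, smul_eq_mul]
  field_simp
  linear_combination (y.1 * v.2 - y.2 * v.1) * ω * hp

lemma AB_dot_self_A (b : ℝ) (y : ℝ × ℝ) : dot y (A b y) = 0 := by
  simp only [dot, A]; ring

lemma AB_wedge_self_A (b : ℝ) (y : ℝ × ℝ) (hy : normSq2 y ≠ 0) : wedge y (A b y) = b := by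
  simp only [wedge, A, normSq2] at *
  field_simp
  ring

lemma AB_normSq2_ne_zero {u : ℝ × ℝ} (hu : u ≠ 0) : normSq2 u ≠ 0 := by
  simp only [normSq2]
  intro h
  have h1 : u.1 = 0 := by nlinarith [sq_nonneg u.1, sq_nonneg u.2]
  have h2 : u.2 = 0 := by nlinarith [sq_nonneg u.1, sq_nonneg u.2]
  exact hu (Prod.ext_iff.mpr ⟨by simpa using h1, by simpa using h2⟩)

lemma AB_traj_hasDerivAt (b ω : ℝ) (y η : ℝ × ℝ) (s : ℝ) :
    HasDerivAt (traj b ω y η)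
      ((-(Real.sin (ω * s)) * ω) • y + (Real.cos (ω * s) * ω / ω) • (η - A b y)) s := by
  have hid : HasDerivAt (fun u : ℝ => ω * u) ω s := by
    simpa using (hasDerivAt_id s).const_mul ω
  have hc : HasDerivAt (fun u : ℝ => Real.cos (ω * u)) (-(Real.sin (ω * s)) * ω) s :=
    (Real.hasDerivAt_cos (ω * s)).comp s hid
  have hs : HasDerivAt (fun u : ℝ => Real.sin (ω * u) / ω) (Real.cos (ω * s) * ω / ω) s :=
    ((Real.hasDerivAt_sin (ω * s)).comp s hid).div_const ω
  exact (hc.smul_const y).add (hs.smul_const (η - A b y))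

lemma AB_deriv_traj (b ω : ℝ) (hω : ω ≠ 0) (y η : ℝ × ℝ) (s : ℝ) :
    deriv (traj b ω y η) s =
      (-(Real.sin (ω * s)) * ω) • y + Real.cos (ω * s) • (η - A b y) := by
  have := (AB_traj_hasDerivAt b ω y η s).deriv
  rw [this, mul_div_assoc, div_self hω, mul_one]

lemma AB_continuous_traj (b ω : ℝ) (y η : ℝ × ℝ) : Continuous (traj b ω y η) := by
  unfold traj
  fun_prop

/-- Pointwise identity for the integrand. -/
lemma AB_integrand_eq (b ω : ℝ) (hω : ω ≠ 0) (y η : ℝ × ℝ) (s : ℝ)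
    (hx : traj b ω y η s ≠ 0) :
    normSq2 (xi b ω y η s) - normSq2 (A b (traj b ω y η s))
      - ω ^ 2 * normSq2 (traj b ω y η s)
    = Real.cos (2 * ω * s) * (normSq2 (η - A b y) - ω ^ 2 * normSq2 y)
      - 2 * ω * Real.sin (2 * ω * s) * dot y (η - A b y)
      + 2 * b * wedge y (η - A b y) * (normSq2 (traj b ω y η s))⁻¹ := by
  set c := Real.cos (ω * s) with hc
  set sn := Real.sin (ω * s) with hsn
  set v := η - A b y with hv
  have hp : sn ^ 2 + c ^ 2 = 1 := Real.sin_sq_add_cos_sq (ω * s)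
  have htr : traj b ω y η s = c • y + (sn / ω) • v := rfl
  have hd : deriv (traj b ω y η) s = (-sn * ω) • y + c • v := AB_deriv_traj b ω hω y η s
  have hr : normSq2 (traj b ω y η s) ≠ 0 := AB_normSq2_ne_zero hx
  have hw : wedge (traj b ω y η s) ((-sn * ω) • y + c • v) = wedge y v := by
    rw [htr]; exact AB_lemC c sn ω hω hp y v
  have hxi : normSq2 (xi b ω y η s)
      = normSq2 ((-sn * ω) • y + c • v)
        + 2 * (b * wedge y v / normSq2 (traj b ω y η s))
        + normSq2 (A b (traj b ω y η s)) := by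
    rw [xi, hd, AB_normSq2_add, AB_dot_A, hw]
  have hcos2 : Real.cos (2 * ω * s) = c ^ 2 - sn ^ 2 := by
    rw [hc, hsn, show (2:ℝ) * ω * s = 2 * (ω * s) by ring, Real.cos_two_mul', sq, sq]
  have hsin2 : Real.sin (2 * ω * s) = 2 * sn * c := by
    rw [hc, hsn, show (2:ℝ) * ω * s = 2 * (ω * s) by ring, Real.sin_two_mul]
  rw [hxi, hcos2, hsin2, htr, div_eq_mul_inv (b * wedge y v)]
  linear_combination AB_lemB c sn ω hω y v

lemma AB_int_cos (ω : ℝ) (hω : ω ≠ 0) (t : ℝ) :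
    ∫ s in (0:ℝ)..t, Real.cos (2 * ω * s) = Real.sin (2 * ω * t) / (2 * ω) := by
  have h2ω : (2:ℝ) * ω ≠ 0 := by simpa using hω
  have key : ∀ s ∈ Set.uIcc (0:ℝ) t,
      HasDerivAt (fun u => Real.sin (2 * ω * u) / (2 * ω)) (Real.cos (2 * ω * s)) s := by
    intro s _
    have hid : HasDerivAt (fun u : ℝ => 2 * ω * u) (2 * ω) s := by
      simpa using (hasDerivAt_id s).const_mul (2 * ω)
    have := ((Real.hasDerivAt_sin (2 * ω * s)).comp s hid).div_const (2 * ω)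
    simpa [mul_div_assoc, div_self h2ω] using this
  have hci : IntervalIntegrable (fun s => Real.cos (2 * ω * s)) MeasureTheory.volume 0 t :=
    (Real.continuous_cos.comp (by fun_prop)).intervalIntegrable 0 t
  rw [intervalIntegral.integral_eq_sub_of_hasDerivAt key hci]
  simp

lemma AB_int_sin (ω : ℝ) (hω : ω ≠ 0) (t : ℝ) :
    ∫ s in (0:ℝ)..t, Real.sin (2 * ω * s) = (1 - Real.cos (2 * ω * t)) / (2 * ω) := by
  have h2ω : (2:ℝ) * ω ≠ 0 := by simpa using hω
  have key : ∀ s ∈ Set.uIcc (0:ℝ) t,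
      HasDerivAt (fun u => -Real.cos (2 * ω * u) / (2 * ω)) (Real.sin (2 * ω * s)) s := by
    intro s _
    have hid : HasDerivAt (fun u : ℝ => 2 * ω * u) (2 * ω) s := by
      simpa using (hasDerivAt_id s).const_mul (2 * ω)
    have := (((Real.hasDerivAt_cos (2 * ω * s)).comp s hid).div_const (2 * ω)).neg
    simpa [Pi.neg_def, neg_div, mul_div_assoc, div_self h2ω] using this
  have hsi : IntervalIntegrable (fun s => Real.sin (2 * ω * s)) MeasureTheory.volume 0 t :=
    (Real.continuous_sin.comp (by fun_prop)).intervalIntegrable 0 t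
  rw [intervalIntegral.integral_eq_sub_of_hasDerivAt key hsi]
  field_simp
  rw [mul_zero, Real.cos_zero]
  ring

lemma AB_dot_sub_A (b : ℝ) (y η : ℝ × ℝ) : dot y (η - A b y) = dot y η := by
  simp only [dot, A, Prod.fst_sub, Prod.snd_sub]; ring

lemma AB_wedge_sub_A (b : ℝ) (y η : ℝ × ℝ) (hy : normSq2 y ≠ 0) :
    wedge y (η - A b y) = wedge y η - b := by
  simp only [wedge, A, normSq2, Prod.fst_sub, Prod.snd_sub] at *
  field_simp
  ring

lemma AB_continuous_normSq2 : Continuous normSq2 := by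
  unfold normSq2; fun_prop

/-- Explicit formula for the action along a trajectory avoiding the origin. -/
theorem action_formula (b ω : ℝ) (hω : 0 < ω)
    (y : ℝ × ℝ) (hy : y ≠ 0) (η : ℝ × ℝ) (t : ℝ) (ht : 0 ≤ t)
    (hne : ∀ s ∈ Set.Icc (0 : ℝ) t, traj b ω y η s ≠ 0) :
    action b ω y η t =
      ((Real.cos (2 * ω * t) - 1) / 2) * dot y η +
      (Real.sin (2 * ω * t) / (4 * ω)) *
        (normSq2 (η - A b y) - ω ^ 2 * normSq2 y) +
      b * (wedge y η - b) *
        ∫ s in (0 : ℝ)..t, (normSq2 (traj b ω y η s))⁻¹ := by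
  have hω' : ω ≠ 0 := ne_of_gt hω
  set K1 : ℝ := normSq2 (η - A b y) - ω ^ 2 * normSq2 y with hK1
  set K3 : ℝ := -(2 * ω) * dot y η with hK3
  set K4 : ℝ := 2 * b * (wedge y η - b) with hK4
  have huIcc : Set.uIcc (0:ℝ) t = Set.Icc 0 t := Set.uIcc_of_le ht
  have hcong : Set.EqOn
      (fun s => normSq2 (xi b ω y η s) - normSq2 (A b (traj b ω y η s))
        - ω ^ 2 * normSq2 (traj b ω y η s))
      (fun s => Real.cos (2 * ω * s) * K1 + Real.sin (2 * ω * s) * K3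
        + (normSq2 (traj b ω y η s))⁻¹ * K4) (Set.uIcc 0 t) := by
    intro s hs
    rw [huIcc] at hs
    have := AB_integrand_eq b ω hω' y η s (hne s hs)
    dsimp only
    rw [this, AB_dot_sub_A, AB_wedge_sub_A b y η (AB_normSq2_ne_zero hy), hK1, hK3, hK4]
    ring
  have hIcos : IntervalIntegrable (fun s => Real.cos (2 * ω * s) * K1)
      MeasureTheory.volume 0 t := by
    apply Continuous.intervalIntegrable; fun_prop
  have hIsin : IntervalIntegrable (fun s => Real.sin (2 * ω * s) * K3)
      MeasureTheory.volume 0 t := by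
    apply Continuous.intervalIntegrable; fun_prop
  have hGcont : ContinuousOn (fun s => (normSq2 (traj b ω y η s))⁻¹) (Set.uIcc 0 t) := by
    rw [huIcc]
    exact ((AB_continuous_normSq2.comp (AB_continuous_traj b ω y η)).continuousOn).inv₀
      fun s hs => AB_normSq2_ne_zero (hne s hs)
  have hIinv : IntervalIntegrable (fun s => (normSq2 (traj b ω y η s))⁻¹ * K4)
      MeasureTheory.volume 0 t :=
    (hGcont.mul continuousOn_const).intervalIntegrable
  rw [action, intervalIntegral.integral_congr hcong,
    intervalIntegral.integral_add (hIcos.add hIsin) hIinv,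
    intervalIntegral.integral_add hIcos hIsin,
    intervalIntegral.integral_mul_const, intervalIntegral.integral_mul_const,
    intervalIntegral.integral_mul_const,
    AB_int_cos ω hω' t, AB_int_sin ω hω' t, hK1, hK3, hK4]
  field_simp
  ring
end

section
/- Fix b ∈ ℝ and ω > 0. Let y ∈ ℝ² with y ≠ 0 and t ≥ 0, and let η ∈ ℝ² be such that x^s(y,η) ≠ 0 for all s ∈ [0,t] (a condition that holds on a neighborhood of η). Then the action S(t,y,·), where S(t,y,η) := (1/2)∫₀ᵗ (|ξ^s|² − |A(x^s)|² − ω²|x^s|²) ds, is differentiable in η and its gradient satisfies ∇_η S(t,y,η) = (sin(ωt)/ω)·ξ^t(y,η), i.e., ∇_η S equals the transposed Jacobian of x^t in η applied to ξ^t. -/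
noncomputable def vel (b ω : ℝ) (y η : ℝ × ℝ) (s : ℝ) : ℝ × ℝ :=
  (-(ω * Real.sin (ω * s))) • y + Real.cos (ω * s) • (η - A b y)

lemma hasDerivAt_traj (b ω : ℝ) (hω : ω ≠ 0) (y η : ℝ × ℝ) (s : ℝ) :
    HasDerivAt (traj b ω y η) (vel b ω y η s) s := by
  have hc : HasDerivAt (fun s => Real.cos (ω * s)) (-(ω * Real.sin (ω * s))) s := by
    have := (Real.hasDerivAt_cos (ω * s)).comp s ((hasDerivAt_id s).const_mul ω)
    simpa [mul_comm, Function.comp_def] using this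
  have hs : HasDerivAt (fun s => Real.sin (ω * s) / ω) (Real.cos (ω * s)) s := by
    have := ((Real.hasDerivAt_sin (ω * s)).comp s ((hasDerivAt_id s).const_mul ω)).div_const ω
    field_simp at this
    simpa [mul_comm] using this
  exact (hc.smul_const y).add (hs.smul_const (η - A b y))

lemma deriv_traj (b ω : ℝ) (hω : ω ≠ 0) (y η : ℝ × ℝ) (s : ℝ) :
    deriv (traj b ω y η) s = vel b ω y η s := (hasDerivAt_traj b ω hω y η s).deriv

lemma xi_eq (b ω : ℝ) (hω : ω ≠ 0) (y η : ℝ × ℝ) (s : ℝ) :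
    xi b ω y η s = vel b ω y η s + A b (traj b ω y η s) := by
  rw [xi, deriv_traj b ω hω]

noncomputable def fExp (b ω : ℝ) (y u : ℝ × ℝ) (s : ℝ) : ℝ :=
  (vel b ω y u s).1 ^ 2 + (vel b ω y u s).2 ^ 2
    + 2 * b * ((traj b ω y u s).1 * (vel b ω y u s).2
        - (traj b ω y u s).2 * (vel b ω y u s).1)
      / ((traj b ω y u s).1 ^ 2 + (traj b ω y u s).2 ^ 2)
    - ω ^ 2 * ((traj b ω y u s).1 ^ 2 + (traj b ω y u s).2 ^ 2)

lemma integrand_eq (b ω : ℝ) (hω : ω ≠ 0) (y u : ℝ × ℝ) (s : ℝ) :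
    normSq2 (xi b ω y u s) - normSq2 (A b (traj b ω y u s))
      - ω ^ 2 * normSq2 (traj b ω y u s) = fExp b ω y u s := by
  rw [xi_eq b ω hω]
  rcases eq_or_ne ((traj b ω y u s).1 ^ 2 + (traj b ω y u s).2 ^ 2) 0 with h | h
  · simp [normSq2, fExp, A, h, Prod.fst_add, Prod.snd_add]
  · simp only [normSq2, fExp, A, Prod.fst_add, Prod.snd_add]
    field_simp
    ring

noncomputable def grad (b ω : ℝ) (y u : ℝ × ℝ) (s : ℝ) : ℝ × ℝ :=
  (2 * Real.cos (ω * s) * (vel b ω y u s).1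
    + 2 * b * ((Real.sin (ω * s) / ω * (vel b ω y u s).2
          - Real.cos (ω * s) * (traj b ω y u s).2)
            * ((traj b ω y u s).1 ^ 2 + (traj b ω y u s).2 ^ 2)
        - 2 * (Real.sin (ω * s) / ω) * (traj b ω y u s).1
            * ((traj b ω y u s).1 * (vel b ω y u s).2
              - (traj b ω y u s).2 * (vel b ω y u s).1))
      / ((traj b ω y u s).1 ^ 2 + (traj b ω y u s).2 ^ 2) ^ 2
    - 2 * ω ^ 2 * (Real.sin (ω * s) / ω) * (traj b ω y u s).1,
   2 * Real.cos (ω * s) * (vel b ω y u s).2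
    + 2 * b * ((Real.cos (ω * s) * (traj b ω y u s).1
          - Real.sin (ω * s) / ω * (vel b ω y u s).1)
            * ((traj b ω y u s).1 ^ 2 + (traj b ω y u s).2 ^ 2)
        - 2 * (Real.sin (ω * s) / ω) * (traj b ω y u s).2
            * ((traj b ω y u s).1 * (vel b ω y u s).2
              - (traj b ω y u s).2 * (vel b ω y u s).1))
      / ((traj b ω y u s).1 ^ 2 + (traj b ω y u s).2 ^ 2) ^ 2
    - 2 * ω ^ 2 * (Real.sin (ω * s) / ω) * (traj b ω y u s).2)

noncomputable def clmOf (g : ℝ × ℝ) : ℝ × ℝ →L[ℝ] ℝ :=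
  g.1 • ContinuousLinearMap.fst ℝ ℝ ℝ + g.2 • ContinuousLinearMap.snd ℝ ℝ ℝ

lemma clmOf_apply (g v : ℝ × ℝ) : clmOf g v = g.1 * v.1 + g.2 * v.2 := by
  simp [clmOf, smul_eq_mul]

lemma traj_fst (b ω : ℝ) (y u : ℝ × ℝ) (s : ℝ) :
    (traj b ω y u s).1
      = Real.cos (ω * s) * y.1 + Real.sin (ω * s) / ω * (u.1 - (A b y).1) := by
  simp [traj, smul_eq_mul, mul_sub]

lemma traj_snd (b ω : ℝ) (y u : ℝ × ℝ) (s : ℝ) :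
    (traj b ω y u s).2
      = Real.cos (ω * s) * y.2 + Real.sin (ω * s) / ω * (u.2 - (A b y).2) := by
  simp [traj, smul_eq_mul, mul_sub]

lemma vel_fst (b ω : ℝ) (y u : ℝ × ℝ) (s : ℝ) :
    (vel b ω y u s).1
      = -(ω * Real.sin (ω * s)) * y.1 + Real.cos (ω * s) * (u.1 - (A b y).1) := by
  simp [vel, smul_eq_mul, mul_sub]

lemma vel_snd (b ω : ℝ) (y u : ℝ × ℝ) (s : ℝ) :
    (vel b ω y u s).2
      = -(ω * Real.sin (ω * s)) * y.2 + Real.cos (ω * s) * (u.2 - (A b y).2) := by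
  simp [vel, smul_eq_mul, mul_sub]

lemma hasFDerivAt_fExp (b ω : ℝ) (y : ℝ × ℝ) (s : ℝ) (u : ℝ × ℝ)
    (hN : (traj b ω y u s).1 ^ 2 + (traj b ω y u s).2 ^ 2 ≠ 0) :
    HasFDerivAt (fun u' => fExp b ω y u' s) (clmOf (grad b ω y u s)) u := by
  set c := Real.cos (ω * s) with hc
  set r := Real.sin (ω * s) / ω with hr
  set a := A b y with ha
  have hX1 : HasFDerivAt (fun u' : ℝ × ℝ => (traj b ω y u' s).1)
      (r • ContinuousLinearMap.fst ℝ ℝ ℝ) u := by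
    simp only [traj_fst]
    exact ((hasFDerivAt_fst.sub_const a.1).const_mul r).const_add _
  have hX2 : HasFDerivAt (fun u' : ℝ × ℝ => (traj b ω y u' s).2)
      (r • ContinuousLinearMap.snd ℝ ℝ ℝ) u := by
    simp only [traj_snd]
    exact ((hasFDerivAt_snd.sub_const a.2).const_mul r).const_add _
  have hV1 : HasFDerivAt (fun u' : ℝ × ℝ => (vel b ω y u' s).1)
      (c • ContinuousLinearMap.fst ℝ ℝ ℝ) u := by
    simp only [vel_fst]
    exact ((hasFDerivAt_fst.sub_const a.1).const_mul c).const_add _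
  have hV2 : HasFDerivAt (fun u' : ℝ × ℝ => (vel b ω y u' s).2)
      (c • ContinuousLinearMap.snd ℝ ℝ ℝ) u := by
    simp only [vel_snd]
    exact ((hasFDerivAt_snd.sub_const a.2).const_mul c).const_add _
  have hDen := (hX1.mul hX1).add (hX2.mul hX2)
  have hN' : (fun u' : ℝ × ℝ => (traj b ω y u' s).1 * (traj b ω y u' s).1
      + (traj b ω y u' s).2 * (traj b ω y u' s).2) u ≠ 0 := by
    simpa [pow_two] using hN
  have hInv := (hasFDerivAt_inv' (𝕜 := ℝ) (R := ℝ) hN').comp u hDen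
  have hNum := ((hX1.mul hV2).sub (hX2.mul hV1)).const_mul (2 * b)
  have H := (((hV1.mul hV1).add (hV2.mul hV2)).add (hNum.mul hInv)).sub
      (hDen.const_mul (ω ^ 2))
  have hfun : (fun u' => fExp b ω y u' s)
      = fun u' => ((vel b ω y u' s).1 * (vel b ω y u' s).1
          + (vel b ω y u' s).2 * (vel b ω y u' s).2
        + 2 * b * ((traj b ω y u' s).1 * (vel b ω y u' s).2
            - (traj b ω y u' s).2 * (vel b ω y u' s).1)
          * ((traj b ω y u' s).1 * (traj b ω y u' s).1
            + (traj b ω y u' s).2 * (traj b ω y u' s).2)⁻¹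
        - ω ^ 2 * ((traj b ω y u' s).1 * (traj b ω y u' s).1
            + (traj b ω y u' s).2 * (traj b ω y u' s).2)) := by
    funext u'; simp only [fExp, div_eq_mul_inv]; ring
  rw [hfun]
  refine H.congr_fderiv ?_
  apply ContinuousLinearMap.ext; intro v
  simp only [clmOf, grad, ContinuousLinearMap.add_apply, ContinuousLinearMap.smul_apply,
    ContinuousLinearMap.sub_apply, ContinuousLinearMap.coe_fst', ContinuousLinearMap.coe_snd',
    smul_eq_mul, ContinuousLinearMap.coe_smul', Pi.smul_apply, ContinuousLinearMap.coe_comp',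
    Function.comp_apply, ContinuousLinearMap.neg_apply, ContinuousLinearMap.mulLeftRight_apply,
    ContinuousLinearMap.coe_sub', Pi.sub_apply, Pi.add_apply, ContinuousLinearMap.coe_add']
  simp only [Pi.add_apply, Pi.mul_apply, Pi.sub_apply, Pi.inv_apply, Function.comp_apply]
  simp only [← pow_two]
  field_simp
  simp only [hc, hr]
  rcases eq_or_ne ω 0 with h0 | h0
  · rw [h0]; ring
  · field_simp
    ring

lemma hasDerivAt_sin_omega (ω s : ℝ) :
    HasDerivAt (fun s => Real.sin (ω * s)) (ω * Real.cos (ω * s)) s := by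
  have := (Real.hasDerivAt_sin (ω * s)).comp s ((hasDerivAt_id s).const_mul ω)
  simpa [mul_comm, Function.comp_def] using this

lemma hasDerivAt_cos_omega (ω s : ℝ) :
    HasDerivAt (fun s => Real.cos (ω * s)) (-(ω * Real.sin (ω * s))) s := by
  have := (Real.hasDerivAt_cos (ω * s)).comp s ((hasDerivAt_id s).const_mul ω)
  simpa [mul_comm, Function.comp_def] using this

lemma hasDerivAt_sin_div (ω : ℝ) (hω : ω ≠ 0) (s : ℝ) :
    HasDerivAt (fun s => Real.sin (ω * s) / ω) (Real.cos (ω * s)) s := by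
  have := (hasDerivAt_sin_omega ω s).div_const ω
  field_simp at this
  exact this

lemma hasDerivAt_X1 (b ω : ℝ) (hω : ω ≠ 0) (y η : ℝ × ℝ) (s : ℝ) :
    HasDerivAt (fun s => (traj b ω y η s).1) ((vel b ω y η s).1) s := by
  simp only [traj_fst, vel_fst]
  exact ((hasDerivAt_cos_omega ω s).mul_const y.1).add
    ((hasDerivAt_sin_div ω hω s).mul_const _)

lemma hasDerivAt_X2 (b ω : ℝ) (hω : ω ≠ 0) (y η : ℝ × ℝ) (s : ℝ) :
    HasDerivAt (fun s => (traj b ω y η s).2) ((vel b ω y η s).2) s := by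
  simp only [traj_snd, vel_snd]
  exact ((hasDerivAt_cos_omega ω s).mul_const y.2).add
    ((hasDerivAt_sin_div ω hω s).mul_const _)

lemma hasDerivAt_V1 (b ω : ℝ) (hω : ω ≠ 0) (y η : ℝ × ℝ) (s : ℝ) :
    HasDerivAt (fun s => (vel b ω y η s).1) (-(ω ^ 2) * (traj b ω y η s).1) s := by
  simp only [vel_fst]
  have h1 : HasDerivAt (fun s => -(ω * Real.sin (ω * s)) * y.1)
      (-(ω * (ω * Real.cos (ω * s))) * y.1) s :=
    (((hasDerivAt_sin_omega ω s).const_mul ω).neg).mul_const y.1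
  have h2 := (hasDerivAt_cos_omega ω s).mul_const (η.1 - (A b y).1)
  refine (h1.add h2).congr_deriv ?_
  simp only [traj_fst]
  field_simp
  ring

lemma hasDerivAt_V2 (b ω : ℝ) (hω : ω ≠ 0) (y η : ℝ × ℝ) (s : ℝ) :
    HasDerivAt (fun s => (vel b ω y η s).2) (-(ω ^ 2) * (traj b ω y η s).2) s := by
  simp only [vel_snd]
  have h1 : HasDerivAt (fun s => -(ω * Real.sin (ω * s)) * y.2)
      (-(ω * (ω * Real.cos (ω * s))) * y.2) s :=
    (((hasDerivAt_sin_omega ω s).const_mul ω).neg).mul_const y.2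
  have h2 := (hasDerivAt_cos_omega ω s).mul_const (η.2 - (A b y).2)
  refine (h1.add h2).congr_deriv ?_
  simp only [traj_snd]
  field_simp
  ring

lemma hasDerivAt_phi (b ω : ℝ) (hω : ω ≠ 0) (y η v : ℝ × ℝ) (s : ℝ)
    (hN : (traj b ω y η s).1 ^ 2 + (traj b ω y η s).2 ^ 2 ≠ 0) :
    HasDerivAt (fun s => Real.sin (ω * s) / ω *
      ((vel b ω y η s).1 * v.1 + (vel b ω y η s).2 * v.2
        + b * ((traj b ω y η s).1 * v.2 - (traj b ω y η s).2 * v.1)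
          * ((traj b ω y η s).1 * (traj b ω y η s).1
            + (traj b ω y η s).2 * (traj b ω y η s).2)⁻¹))
      ((1 / 2) * clmOf (grad b ω y η s) v) s := by
  have hX1 := hasDerivAt_X1 b ω hω y η s
  have hX2 := hasDerivAt_X2 b ω hω y η s
  have hV1 := hasDerivAt_V1 b ω hω y η s
  have hV2 := hasDerivAt_V2 b ω hω y η s
  have hN' : ((fun s => (traj b ω y η s).1 * (traj b ω y η s).1
      + (traj b ω y η s).2 * (traj b ω y η s).2) s) ≠ 0 := by
    simpa [pow_two] using hN
  have hDen := (hX1.mul hX1).add (hX2.mul hX2)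
  have hInv := hDen.inv hN'
  have hNum := ((hX1.mul_const v.2).sub (hX2.mul_const v.1)).const_mul b
  have H := (hasDerivAt_sin_div ω hω s).mul
    (((hV1.mul_const v.1).add (hV2.mul_const v.2)).add (hNum.mul hInv))
  refine H.congr_deriv ?_
  rw [clmOf_apply]
  simp only [grad]
  simp only [Pi.add_apply, Pi.mul_apply, Pi.sub_apply, Pi.inv_apply, Function.comp_apply]
  simp only [← pow_two]
  field_simp
  ring

lemma normSq_ne (x : ℝ × ℝ) (h : x ≠ 0) : x.1 ^ 2 + x.2 ^ 2 ≠ 0 := by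
  intro h0
  apply h
  have h1 : x.1 = 0 := by nlinarith [sq_nonneg x.1, sq_nonneg x.2]
  have h2 : x.2 = 0 := by nlinarith [sq_nonneg x.1, sq_nonneg x.2]
  exact Prod.ext h1 h2

lemma traj_sub (b ω : ℝ) (y η u : ℝ × ℝ) (s : ℝ) :
    traj b ω y u s - traj b ω y η s = (Real.sin (ω * s) / ω) • (u - η) := by
  simp only [traj, smul_sub]
  abel

lemma continuous_traj_comp (b ω : ℝ) (y : ℝ × ℝ) :
    Continuous (fun q : ℝ × (ℝ × ℝ) => traj b ω y q.2 q.1) := by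
  unfold traj
  fun_prop

lemma exists_eps (b ω : ℝ) (hω : 0 < ω) (y η : ℝ × ℝ) (t : ℝ) (ht : 0 ≤ t)
    (hne : ∀ s ∈ Set.Icc (0 : ℝ) t, traj b ω y η s ≠ 0) :
    ∃ ε > 0, ∀ s ∈ Set.Icc (0 : ℝ) t, ∀ u ∈ Metric.closedBall η ε,
      traj b ω y u s ≠ 0 := by
  have hcont : ContinuousOn (fun s => ‖traj b ω y η s‖) (Set.Icc 0 t) := by
    have : Continuous (fun s => traj b ω y η s) := by
      unfold traj; fun_prop
    exact this.norm.continuousOn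
  obtain ⟨s₀, hs₀, hmin⟩ := isCompact_Icc.exists_isMinOn
    (Set.nonempty_Icc.2 ht) hcont
  set δ := ‖traj b ω y η s₀‖ with hδ
  have hδpos : 0 < δ := norm_pos_iff.2 (hne s₀ hs₀)
  refine ⟨ω * δ / 2, by positivity, fun s hs u hu => ?_⟩
  have hd : ‖traj b ω y u s - traj b ω y η s‖ ≤ δ / 2 := by
    rw [traj_sub, norm_smul]
    have h1 : |Real.sin (ω * s) / ω| ≤ 1 / ω := by
      rw [abs_div, abs_of_pos hω]
      have : |Real.sin (ω * s)| ≤ 1 := abs_le_one_iff_mul_self_le_one.mpr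
        (by nlinarith [Real.neg_one_le_sin (ω * s), Real.sin_le_one (ω * s)])
      gcongr
    have h2 : ‖u - η‖ ≤ ω * δ / 2 := by
      rw [← dist_eq_norm]; exact Metric.mem_closedBall.1 hu
    calc |Real.sin (ω * s) / ω| * ‖u - η‖ ≤ (1 / ω) * (ω * δ / 2) := by
          apply mul_le_mul h1 h2 (norm_nonneg _) (by positivity)
      _ = δ / 2 := by field_simp
  intro h0
  have h3 : δ ≤ ‖traj b ω y η s‖ := hmin hs
  have h4 : ‖traj b ω y η s‖ = ‖traj b ω y u s - traj b ω y η s‖ := by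
    rw [h0]; simp
  rw [h4] at h3
  linarith

lemma continuous_clmOf : Continuous clmOf := by
  unfold clmOf
  exact (continuous_fst.smul continuous_const).add (continuous_snd.smul continuous_const)

lemma continuousOn_grad (b ω : ℝ) (y : ℝ × ℝ) (K : Set (ℝ × (ℝ × ℝ)))
    (hK : ∀ q ∈ K, (traj b ω y q.2 q.1).1 ^ 2 + (traj b ω y q.2 q.1).2 ^ 2 ≠ 0) :
    ContinuousOn (fun q : ℝ × (ℝ × ℝ) => grad b ω y q.2 q.1) K := by
  have hX1 : Continuous fun q : ℝ × (ℝ × ℝ) => (traj b ω y q.2 q.1).1 := by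
    simp only [traj_fst]; fun_prop
  have hX2 : Continuous fun q : ℝ × (ℝ × ℝ) => (traj b ω y q.2 q.1).2 := by
    simp only [traj_snd]; fun_prop
  have hV1 : Continuous fun q : ℝ × (ℝ × ℝ) => (vel b ω y q.2 q.1).1 := by
    simp only [vel_fst]; fun_prop
  have hV2 : Continuous fun q : ℝ × (ℝ × ℝ) => (vel b ω y q.2 q.1).2 := by
    simp only [vel_snd]; fun_prop
  have hNne : ∀ q ∈ K, ((traj b ω y q.2 q.1).1 ^ 2 + (traj b ω y q.2 q.1).2 ^ 2) ^ 2 ≠ 0 :=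
    fun q hq => pow_ne_zero _ (hK q hq)
  unfold grad
  exact ContinuousOn.prodMk
    (ContinuousOn.sub
      (ContinuousOn.add (Continuous.continuousOn (by fun_prop))
        (ContinuousOn.div (Continuous.continuousOn (by fun_prop))
          (Continuous.continuousOn (by fun_prop)) hNne))
      (Continuous.continuousOn (by fun_prop)))
    (ContinuousOn.sub
      (ContinuousOn.add (Continuous.continuousOn (by fun_prop))
        (ContinuousOn.div (Continuous.continuousOn (by fun_prop))
          (Continuous.continuousOn (by fun_prop)) hNne))
      (Continuous.continuousOn (by fun_prop)))

lemma continuous_fExp_aux (b ω : ℝ) (y u : ℝ × ℝ) :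
    Continuous (fun s => (vel b ω y u s).1 ^ 2 + (vel b ω y u s).2 ^ 2)
    ∧ Continuous (fun s => 2 * b * ((traj b ω y u s).1 * (vel b ω y u s).2
        - (traj b ω y u s).2 * (vel b ω y u s).1))
    ∧ Continuous (fun s => (traj b ω y u s).1 ^ 2 + (traj b ω y u s).2 ^ 2) := by
  have hX1 : Continuous fun s => (traj b ω y u s).1 := by simp only [traj_fst]; fun_prop
  have hX2 : Continuous fun s => (traj b ω y u s).2 := by simp only [traj_snd]; fun_prop
  have hV1 : Continuous fun s => (vel b ω y u s).1 := by simp only [vel_fst]; fun_prop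
  have hV2 : Continuous fun s => (vel b ω y u s).2 := by simp only [vel_snd]; fun_prop
  exact ⟨by fun_prop, by fun_prop, by fun_prop⟩

lemma measurable_fExp (b ω : ℝ) (y u : ℝ × ℝ) :
    Measurable (fun s => fExp b ω y u s) := by
  obtain ⟨h1, h2, h3⟩ := continuous_fExp_aux b ω y u
  unfold fExp
  exact (h1.measurable.add (h2.measurable.div h3.measurable)).sub
    (measurable_const.mul h3.measurable)

lemma continuousOn_fExp (b ω : ℝ) (y u : ℝ × ℝ) (S : Set ℝ)
    (hS : ∀ s ∈ S, (traj b ω y u s).1 ^ 2 + (traj b ω y u s).2 ^ 2 ≠ 0) :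
    ContinuousOn (fun s => fExp b ω y u s) S := by
  obtain ⟨h1, h2, h3⟩ := continuous_fExp_aux b ω y u
  unfold fExp
  exact (h1.continuousOn.add (h2.continuousOn.div h3.continuousOn hS)).sub
    (continuousOn_const.mul h3.continuousOn)

/-- The gradient of the action in `η` is `(sin(ωt)/ω)·ξ^t(y,η)`, i.e. the
transposed Jacobian of `x^t` in `η` applied to `ξ^t`. -/
theorem action_grad_eta (b ω : ℝ) (hω : 0 < ω)
    (y : ℝ × ℝ) (hy : y ≠ 0) (t : ℝ) (ht : 0 ≤ t) (η : ℝ × ℝ)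
    (hne : ∀ s ∈ Set.Icc (0 : ℝ) t, traj b ω y η s ≠ 0) :
    ∃ L : ℝ × ℝ →L[ℝ] ℝ,
      HasFDerivAt (fun η' => action b ω y η' t) L η ∧
      ∀ v : ℝ × ℝ, L v = (Real.sin (ω * t) / ω) * dot (xi b ω y η t) v := by
  have hω' : ω ≠ 0 := ne_of_gt hω
  obtain ⟨ε, hε, hKne⟩ := exists_eps b ω hω y η t ht hne
  set K : Set (ℝ × (ℝ × ℝ)) := Set.Icc (0 : ℝ) t ×ˢ Metric.closedBall η ε with hKdef
  have hKN : ∀ q ∈ K, (traj b ω y q.2 q.1).1 ^ 2 + (traj b ω y q.2 q.1).2 ^ 2 ≠ 0 := by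
    rintro ⟨s, u⟩ ⟨hs, hu⟩
    exact normSq_ne _ (hKne s hs u hu)
  have hgradK : ContinuousOn (fun q : ℝ × (ℝ × ℝ) => clmOf (grad b ω y q.2 q.1)) K :=
    continuous_clmOf.comp_continuousOn (continuousOn_grad b ω y K hKN)
  have hcompact : IsCompact K := isCompact_Icc.prod (isCompact_closedBall η ε)
  obtain ⟨C, hC⟩ := hcompact.exists_bound_of_continuousOn hgradK
  have hmemK : ∀ s ∈ Set.Icc (0 : ℝ) t, ∀ u ∈ Metric.closedBall η ε,
      ((s, u) : ℝ × (ℝ × ℝ)) ∈ K := fun s hs u hu => ⟨hs, hu⟩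
  have hsubset : Set.uIoc (0 : ℝ) t ⊆ Set.Icc 0 t := by
    rw [Set.uIoc_of_le ht]; exact Set.Ioc_subset_Icc_self
  have hηball : η ∈ Metric.closedBall η ε := Metric.mem_closedBall_self (le_of_lt hε)
  have hgradIcc : ContinuousOn (fun s => grad b ω y η s) (Set.Icc 0 t) := by
    have := (continuousOn_grad b ω y K hKN).comp
      ((continuous_id.prodMk continuous_const).continuousOn
        (s := Set.Icc (0:ℝ) t)) (fun s hs => hmemK s hs η hηball)
    simpa [Function.comp_def] using this
  have hF'cont : ContinuousOn (fun s => clmOf (grad b ω y η s)) (Set.Icc 0 t) :=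
    continuous_clmOf.comp_continuousOn hgradIcc
  have main : HasFDerivAt (fun u => ∫ s in (0:ℝ)..t, fExp b ω y u s)
      (∫ s in (0:ℝ)..t, clmOf (grad b ω y η s)) η := by
    apply hasFDerivAt_integral_of_dominated_of_fderiv_le''
      (F' := fun u s => clmOf (grad b ω y u s)) (bound := fun _ => C) (Metric.ball_mem_nhds η hε)
    · exact Filter.Eventually.of_forall fun u =>
        (measurable_fExp b ω y u).aestronglyMeasurable
    · apply ContinuousOn.intervalIntegrable
      rw [Set.uIcc_of_le ht]
      exact continuousOn_fExp b ω y η _ (fun s hs => normSq_ne _ (hne s hs))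
    · exact (hF'cont.mono hsubset).aestronglyMeasurable measurableSet_uIoc
    · refine (MeasureTheory.ae_restrict_mem measurableSet_uIoc).mono fun s hs u hu => ?_
      exact hC (s, u) (hmemK s (hsubset hs) u (Metric.ball_subset_closedBall hu))
    · exact intervalIntegrable_const
    · refine (MeasureTheory.ae_restrict_mem measurableSet_uIoc).mono fun s hs u hu => ?_
      exact hasFDerivAt_fExp b ω y s u
        (normSq_ne _ (hKne s (hsubset hs) u (Metric.ball_subset_closedBall hu)))
  have heq : (fun u => action b ω y u t)
      = fun u => (1 / 2 : ℝ) * ∫ s in (0:ℝ)..t, fExp b ω y u s := by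
    funext u
    rw [action]
    congr 1
    exact intervalIntegral.integral_congr fun s _ => integrand_eq b ω hω' y u s
  refine ⟨(1 / 2 : ℝ) • (∫ s in (0:ℝ)..t, clmOf (grad b ω y η s)), ?_, ?_⟩
  · rw [heq]
    exact main.const_mul (1 / 2)
  · intro v
    have hInt : IntervalIntegrable (fun s => clmOf (grad b ω y η s))
        MeasureTheory.volume 0 t := by
      apply ContinuousOn.intervalIntegrable
      rwa [Set.uIcc_of_le ht]
    have happ : (∫ s in (0:ℝ)..t, clmOf (grad b ω y η s)) v
        = ∫ s in (0:ℝ)..t, clmOf (grad b ω y η s) v :=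
      ContinuousLinearMap.intervalIntegral_apply hInt v
    set φ : ℝ → ℝ := fun s => Real.sin (ω * s) / ω *
      ((vel b ω y η s).1 * v.1 + (vel b ω y η s).2 * v.2
        + b * ((traj b ω y η s).1 * v.2 - (traj b ω y η s).2 * v.1)
          * ((traj b ω y η s).1 * (traj b ω y η s).1
            + (traj b ω y η s).2 * (traj b ω y η s).2)⁻¹) with hφdef
    have hder : ∀ s ∈ Set.uIcc (0 : ℝ) t,
        HasDerivAt φ ((1 / 2) * clmOf (grad b ω y η s) v) s := by
      intro s hs
      rw [Set.uIcc_of_le ht] at hs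
      exact hasDerivAt_phi b ω hω' y η v s (normSq_ne _ (hne s hs))
    have happly : ContinuousOn (fun s => (1 / 2 : ℝ) * clmOf (grad b ω y η s) v)
        (Set.Icc 0 t) := by
      simp only [clmOf_apply]
      exact continuousOn_const.mul
        (((continuous_fst.comp_continuousOn hgradIcc).mul continuousOn_const).add
          ((continuous_snd.comp_continuousOn hgradIcc).mul continuousOn_const))
    have hint2 : IntervalIntegrable (fun s => (1 / 2 : ℝ) * clmOf (grad b ω y η s) v)
        MeasureTheory.volume 0 t := by
      apply ContinuousOn.intervalIntegrable
      rwa [Set.uIcc_of_le ht]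
    have hFTC := intervalIntegral.integral_eq_sub_of_hasDerivAt hder hint2
    have hφ0 : φ 0 = 0 := by simp [hφdef]
    have hNt : (traj b ω y η t).1 ^ 2 + (traj b ω y η t).2 ^ 2 ≠ 0 :=
      normSq_ne _ (hne t ⟨ht, le_refl t⟩)
    calc ((1 / 2 : ℝ) • (∫ s in (0:ℝ)..t, clmOf (grad b ω y η s))) v
        = (1 / 2 : ℝ) * ((∫ s in (0:ℝ)..t, clmOf (grad b ω y η s)) v) := by
          simp [ContinuousLinearMap.smul_apply, smul_eq_mul]
      _ = (1 / 2 : ℝ) * ∫ s in (0:ℝ)..t, clmOf (grad b ω y η s) v := by rw [happ]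
      _ = ∫ s in (0:ℝ)..t, (1 / 2 : ℝ) * clmOf (grad b ω y η s) v :=
          (intervalIntegral.integral_const_mul _ _).symm
      _ = φ t - φ 0 := hFTC
      _ = φ t := by rw [hφ0, sub_zero]
      _ = Real.sin (ω * t) / ω * dot (xi b ω y η t) v := by
          rw [hφdef, xi_eq b ω hω', dot]
          simp only [Prod.fst_add, Prod.snd_add, A]
          rw [show (traj b ω y η t).1 * (traj b ω y η t).1
              + (traj b ω y η t).2 * (traj b ω y η t).2
              = (traj b ω y η t).1 ^ 2 + (traj b ω y η t).2 ^ 2 by ring]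
          field_simp [hNt]
          ring
end
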